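/- Let K be a convex body in ℝ^n with 0 in its interior. Then ∫_{ℝ^n} e^{−h_K(x)} dx = n! · V_n(K*), where h_K is the support function of K and K* is the polar body of K. -/

import Mathlib

open MeasureTheory Set
open scoped ENNReal Pointwise

/-- The support function of a set `K ⊆ ℝⁿ`: `h_K(x) = sup_{y ∈ K} ⟨x, y⟩`. -/
noncomputable def suppFn {n : ℕ} (K : Set (Fin n → ℝ)) (x : Fin n → ℝ) : ℝ :=
  sSup ((fun y => ∑ i, x i * y i) '' K)

/-- The polar body of `K`: `K* = {x : ⟨x, y⟩ ≤ 1 for all y ∈ K}`. -/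
def polarSet {n : ℕ} (K : Set (Fin n → ℝ)) : Set (Fin n → ℝ) :=
  {x | ∀ y ∈ K, ∑ i, x i * y i ≤ 1}

section Aux

variable {n : ℕ} {K : Set (Fin n → ℝ)}

lemma continuous_pairing (x : Fin n → ℝ) :
    Continuous (fun y : Fin n → ℝ => ∑ i, x i * y i) := by
  exact continuous_finset_sum _ fun i _ => continuous_const.mul (continuous_apply i)

lemma bddAbove_pairing_image (hK : IsCompact K) (x : Fin n → ℝ) :
    BddAbove ((fun y => ∑ i, x i * y i) '' K) :=
  (hK.image (continuous_pairing x)).bddAbove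

lemma suppFn_nonneg (hK : IsCompact K) (h0K : (0 : Fin n → ℝ) ∈ K) (x : Fin n → ℝ) :
    0 ≤ suppFn K x := by
  have hmem : (0 : ℝ) ∈ (fun y => ∑ i, x i * y i) '' K := ⟨0, h0K, by simp⟩
  exact le_csSup (bddAbove_pairing_image hK x) hmem

lemma suppFn_le_iff (hK : IsCompact K) (hne : K.Nonempty) {x : Fin n → ℝ} {t : ℝ} :
    suppFn K x ≤ t ↔ ∀ y ∈ K, ∑ i, x i * y i ≤ t := by
  rw [suppFn, csSup_le_iff (bddAbove_pairing_image hK x) (hne.image _)]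
  simp [forall_mem_image]

lemma suppFn_continuous (hK : IsCompact K) (hne : K.Nonempty) :
    Continuous (suppFn K) := by
  obtain ⟨M, hM⟩ := hK.isBounded.subset_closedBall 0
  have hM0 : 0 ≤ M := by
    obtain ⟨y, hy⟩ := hne
    have := hM hy
    simp only [Metric.mem_closedBall, dist_zero_right] at this
    exact le_trans (norm_nonneg _) this
  have hyle : ∀ y ∈ K, ∀ i, |y i| ≤ M := by
    intro y hy i
    have h1 := hM hy
    simp only [Metric.mem_closedBall, dist_zero_right] at h1
    exact le_trans (norm_le_pi_norm y i) h1
  have key : ∀ x z : Fin n → ℝ, suppFn K x ≤ suppFn K z + (n * M) * dist x z := by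
    intro x z
    apply csSup_le (hne.image _)
    rintro _ ⟨y, hy, rfl⟩
    have h1 : ∑ i, x i * y i = ∑ i, z i * y i + ∑ i, (x i - z i) * y i := by
      rw [← Finset.sum_add_distrib]
      exact Finset.sum_congr rfl fun i _ => by ring
    have h2 : ∑ i, z i * y i ≤ suppFn K z := le_csSup (bddAbove_pairing_image hK z) ⟨y, hy, rfl⟩
    have h3 : ∑ i, (x i - z i) * y i ≤ (n * M) * dist x z := by
      calc ∑ i, (x i - z i) * y i ≤ ∑ i : Fin n, dist x z * M := by
            apply Finset.sum_le_sum
            intro i _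
            calc (x i - z i) * y i ≤ |(x i - z i) * y i| := le_abs_self _
              _ = |x i - z i| * |y i| := abs_mul _ _
              _ ≤ dist x z * M := by
                  apply mul_le_mul ?_ (hyle y hy i) (abs_nonneg _) dist_nonneg
                  have : x i - z i = (x - z) i := by simp
                  rw [this, ← Real.norm_eq_abs, dist_eq_norm]
                  exact norm_le_pi_norm (x - z) i
        _ = (n * M) * dist x z := by
            rw [Finset.sum_const, Finset.card_univ, Fintype.card_fin]

            ring
    dsimp only
    linarith
  have hlip : LipschitzWith (Real.toNNReal (n * M)) (suppFn K) := by
    apply LipschitzWith.of_dist_le_mul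
    intro x z
    rw [Real.dist_eq, Real.coe_toNNReal _ (by positivity)]
    rw [abs_sub_le_iff]
    constructor
    · have := key x z
      linarith
    · have := key z x
      rw [dist_comm] at this
      linarith
  exact hlip.continuous

lemma levelSet_eq (hK : IsCompact K) (hne : K.Nonempty) {t : ℝ} (ht : 0 < t) :
    {x | suppFn K x ≤ t} = t • polarSet K := by
  ext x
  rw [mem_smul_set_iff_inv_smul_mem₀ ht.ne']
  simp only [mem_setOf_eq, suppFn_le_iff hK hne, polarSet, mem_setOf_eq]
  have hsum : ∀ y : Fin n → ℝ, ∑ i, (t⁻¹ • x) i * y i = (∑ i, x i * y i) / t := by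
    intro y
    rw [div_eq_inv_mul, Finset.mul_sum]
    exact Finset.sum_congr rfl fun i _ => by simp [mul_assoc]
  constructor
  · intro h y hy
    rw [hsum y, div_le_one ht]
    exact h y hy
  · intro h y hy
    have := h y hy
    rw [hsum y, div_le_one ht] at this
    exact this

lemma volume_levelSet (hK : IsCompact K) (hne : K.Nonempty) {t : ℝ} (ht : 0 < t) :
    volume {x | suppFn K x ≤ t} = ENNReal.ofReal (t ^ n) * volume (polarSet K) := by
  rw [levelSet_eq hK hne ht, Measure.addHaar_smul_of_nonneg volume ht.le]
  congr 2
  rw [Module.finrank_fintype_fun_eq_card, Fintype.card_fin]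

lemma integrable_exp_neg_mul_pow (n : ℕ) :
    IntegrableOn (fun x : ℝ => Real.exp (-x) * x ^ n) (Ioi 0) := by
  have h1 : (0 : ℝ) < (n : ℝ) + 1 := by positivity
  apply (Real.GammaIntegral_convergent h1).congr_fun _ measurableSet_Ioi
  intro x hx
  simp only [add_sub_cancel_right, Real.rpow_natCast]

lemma integral_exp_neg_mul_pow (n : ℕ) :
    ∫ x in Ioi (0 : ℝ), Real.exp (-x) * x ^ n = n.factorial := by
  have h1 : (0 : ℝ) < (n : ℝ) + 1 := by positivity
  have h2 := Real.Gamma_eq_integral h1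
  rw [Real.Gamma_nat_eq_factorial n] at h2
  have h3 : ∫ x in Ioi (0:ℝ), Real.exp (-x) * x ^ ((n:ℝ) + 1 - 1)
      = ∫ x in Ioi (0:ℝ), Real.exp (-x) * x ^ n := by
    apply setIntegral_congr_fun measurableSet_Ioi
    intro x hx
    simp only [add_sub_cancel_right, Real.rpow_natCast]
  rw [← h3, ← h2]

lemma lintegral_exp_neg_Ici (a : ℝ) :
    ∫⁻ t in Ici a, ENNReal.ofReal (Real.exp (-t)) = ENNReal.ofReal (Real.exp (-a)) := by
  rw [← Measure.restrict_congr_set Ioi_ae_eq_Ici]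
  have hint : IntegrableOn (fun t : ℝ => Real.exp (-t)) (Ioi a) := by
    have := exp_neg_integrableOn_Ioi a (one_pos (α := ℝ))
    simpa using this
  rw [← ofReal_integral_eq_lintegral_ofReal hint
    (ae_of_all _ fun t => (Real.exp_pos _).le), integral_exp_neg_Ioi]

end Aux

/-- For a convex body `K` in `ℝⁿ` with `0` in its interior,
`∫ e^{−h_K(x)} dx = n! · V_n(K*)`. -/
theorem integral_exp_neg_suppFn {n : ℕ} (K : Set (Fin n → ℝ))
    (hKcomp : IsCompact K) (hKconv : Convex ℝ K) (h0 : 0 ∈ interior K) :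
    ∫ x, Real.exp (-(suppFn K x)) =
      (Nat.factorial n : ℝ) * (volume (polarSet K)).toReal := by
  have h0K : (0 : Fin n → ℝ) ∈ K := interior_subset h0
  have hne : K.Nonempty := ⟨0, h0K⟩
  have hcont : Continuous (suppFn K) := suppFn_continuous hKcomp hne
  have hnn : ∀ x, 0 ≤ suppFn K x := suppFn_nonneg hKcomp h0K
  set V := volume (polarSet K) with hV
  set F : (Fin n → ℝ) → ℝ → ℝ≥0∞ := fun x t =>
    ({p : (Fin n → ℝ) × ℝ | suppFn K p.1 ≤ p.2}).indicator
      (fun p => ENNReal.ofReal (Real.exp (-p.2))) (x, t) with hFdef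
  have hA : MeasurableSet {p : (Fin n → ℝ) × ℝ | suppFn K p.1 ≤ p.2} :=
    (isClosed_le (hcont.comp continuous_fst) continuous_snd).measurableSet
  have hFmeas : Measurable (Function.uncurry F) := by
    have : Function.uncurry F =
        ({p : (Fin n → ℝ) × ℝ | suppFn K p.1 ≤ p.2}).indicator
          (fun p => ENNReal.ofReal (Real.exp (-p.2))) := by
      funext p
      simp [Function.uncurry, hFdef]
    rw [this]
    exact (ENNReal.measurable_ofReal.comp
      (Real.continuous_exp.comp continuous_snd.neg).measurable).indicator hA
  have step1 : ∀ x, ∫⁻ t, F x t = ENNReal.ofReal (Real.exp (-(suppFn K x))) := by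
    intro x
    have heq : ∀ t, F x t = (Ici (suppFn K x)).indicator
        (fun t => ENNReal.ofReal (Real.exp (-t))) t := by
      intro t
      simp [hFdef, indicator_apply, mem_Ici, mem_setOf_eq]
    rw [lintegral_congr heq, lintegral_indicator measurableSet_Ici,
      lintegral_exp_neg_Ici]
  have step2 : ∀ t, ∫⁻ x, F x t
      = ENNReal.ofReal (Real.exp (-t)) * volume {x | suppFn K x ≤ t} := by
    intro t
    have heq : ∀ x, F x t = ({x : Fin n → ℝ | suppFn K x ≤ t}).indicator
        (fun _ => ENNReal.ofReal (Real.exp (-t))) x := by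
      intro x
      simp [hFdef, indicator_apply, mem_setOf_eq]
    rw [lintegral_congr heq,
      lintegral_indicator (isClosed_le hcont continuous_const).measurableSet,
      setLIntegral_const]
  have key : ∫⁻ x, ENNReal.ofReal (Real.exp (-(suppFn K x)))
      = ENNReal.ofReal (n.factorial) * V := by
    calc ∫⁻ x, ENNReal.ofReal (Real.exp (-(suppFn K x)))
        = ∫⁻ x, ∫⁻ t, F x t := by
          exact (lintegral_congr step1).symm
      _ = ∫⁻ t, ∫⁻ x, F x t := lintegral_lintegral_swap hFmeas.aemeasurable
      _ = ∫⁻ t, ENNReal.ofReal (Real.exp (-t)) * volume {x | suppFn K x ≤ t} :=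
          lintegral_congr step2
      _ = (∫⁻ t in Iio 0, ENNReal.ofReal (Real.exp (-t)) * volume {x | suppFn K x ≤ t})
          + ∫⁻ t in (Iio 0)ᶜ, ENNReal.ofReal (Real.exp (-t)) * volume {x | suppFn K x ≤ t} :=
          (lintegral_add_compl _ measurableSet_Iio).symm
      _ = ENNReal.ofReal (n.factorial) * V := by
          have hIio : (∫⁻ t in Iio 0,
              ENNReal.ofReal (Real.exp (-t)) * volume {x | suppFn K x ≤ t}) = 0 := by
            rw [setLIntegral_congr_fun measurableSet_Iio
              (fun ⦃t⦄ (ht : t < 0) => ?_), lintegral_zero]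
            have : {x | suppFn K x ≤ t} = ∅ := by
              ext x
              simp only [mem_setOf_eq, mem_empty_iff_false, iff_false, not_le]
              exact lt_of_lt_of_le ht (hnn x)
            rw [this, measure_empty, mul_zero]
          rw [hIio, zero_add, compl_Iio,
            ← Measure.restrict_congr_set Ioi_ae_eq_Ici]
          have hcongr : ∫⁻ t in Ioi (0:ℝ),
              ENNReal.ofReal (Real.exp (-t)) * volume {x | suppFn K x ≤ t}
              = ∫⁻ t in Ioi (0:ℝ), ENNReal.ofReal (Real.exp (-t) * t ^ n) * V := by
            apply setLIntegral_congr_fun measurableSet_Ioi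
            intro t ht
            beta_reduce
            rw [volume_levelSet hKcomp hne ht, ← mul_assoc,
              ← ENNReal.ofReal_mul (Real.exp_pos _).le]
          have hmeas : Measurable (fun t : ℝ => ENNReal.ofReal (Real.exp (-t) * t ^ n)) :=
            ENNReal.measurable_ofReal.comp
              (((Real.continuous_exp.comp continuous_neg).mul (continuous_pow n)).measurable)
          have hnn' : 0 ≤ᵐ[volume.restrict (Ioi (0:ℝ))] fun t => Real.exp (-t) * t ^ n :=
            (ae_restrict_iff' measurableSet_Ioi).2
              (ae_of_all _ fun t (ht : (0:ℝ) < t) => by positivity)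
          rw [hcongr, lintegral_mul_const V hmeas,
            ← ofReal_integral_eq_lintegral_ofReal (integrable_exp_neg_mul_pow n) hnn',
            integral_exp_neg_mul_pow n]
  rw [integral_eq_lintegral_of_nonneg_ae
    (ae_of_all _ fun x => (Real.exp_pos _).le)
    (by exact hcont.neg.rexp.aestronglyMeasurable :
      AEStronglyMeasurable (fun x => Real.exp (-(suppFn K x))) volume), key, ENNReal.toReal_mul,
    ENNReal.toReal_ofReal (Nat.cast_nonneg _)]
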